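/- Let S be a commutative periodic semigroup, let T = s_1⋯s_m be a sequence over S, let R be an integral domain, and let a_1,…,a_m ∈ R∖{0}. Write f = (X^{s_1} − a_1 X^{e(s_1)})⋯(X^{s_m} − a_m X^{e(s_m)}) = Σ_{s∈S} c_s X^s in R[X;S], and set e = e(s_1) + ⋯ + e(s_m). If St(e) ∩ Σ(T) = ∅, then c_e ≠ 0; in particular f ≠ 0. -/

import Mathlib

namespace ZS

variable (S : Type*) [AddCommSemigroup S]

/-- `nsmul' n x = (n+1)·x`, iterated addition in a semigroup. -/
def nsmul' : ℕ → S → S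
  | 0, x => x
  | n + 1, x => x + nsmul' n x

/-- The cyclic subsemigroup `⟨x⟩ = {x, 2x, 3x, …}` generated by `x`. -/
def cyc (x : S) : Set S := Set.range fun n => nsmul' S n x

/-- `x` is periodic if `⟨x⟩` is finite. -/
def IsPeriodicElem (x : S) : Prop := (cyc S x).Finite

/-- A semigroup is periodic if every element is periodic. -/
def IsPeriodicSemigroup : Prop := ∀ x : S, IsPeriodicElem S x

/-- `ρ(x)`: the least `m ≥ 1` such that `m·x` is idempotent (equivalently `m·x = e(x)`). -/
noncomputable def rho (x : S) : ℕ :=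
  sInf {n : ℕ | nsmul' S n x + nsmul' S n x = nsmul' S n x} + 1

/-- `e(x)`: the unique idempotent of the finite cyclic semigroup `⟨x⟩`. -/
noncomputable def eIdem (x : S) : S :=
  nsmul' S (sInf {n : ℕ | nsmul' S n x + nsmul' S n x = nsmul' S n x}) x

/-- The period of a (periodic) element `x`: the least `n > 0` with `(m+n)x = mx` for some `m`. -/
noncomputable def period (x : S) : ℕ :=
  sInf {n : ℕ | 0 < n ∧ ∃ m : ℕ, nsmul' S (m + n) x = nsmul' S m x}

/-- The index of a (periodic) element `x`: the least `k ≥ 1` with `kx = tx` for some `t ≠ k`. -/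
noncomputable def indexOf (x : S) : ℕ :=
  sInf {k : ℕ | ∃ t : ℕ, t ≠ k ∧ nsmul' S k x = nsmul' S t x} + 1

/-- `exp(S)`: the lcm of the periods of the elements of `S`, described as the least positive
common multiple of all the periods. -/
noncomputable def expS : ℕ := sInf {n : ℕ | 0 < n ∧ ∀ x : S, period S x ∣ n}

/-- `K` is a splitting field for exponent `n`: it contains exactly `n` `n`-th roots of unity. -/
def SplitField (K : Type*) [Field K] (n : ℕ) : Prop := Set.ncard {ζ : K | ζ ^ n = 1} = n

/-- Green's preorder `a ≼_𝓗 b`. -/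
def gLe (a b : S) : Prop := a = b ∨ ∃ c : S, a = b + c

/-- Green's congruence `a 𝓗 b`. -/
def gEq (a b : S) : Prop := gLe S a b ∧ gLe S b a

/-- `a ≺_𝓗 b`. -/
def gLt (a b : S) : Prop := gLe S a b ∧ ¬ gLe S b a

/-- The Green class `H_a`. -/
def HClass (a : S) : Set S := {x : S | gEq S x a}

/-- The stabilizer `St(H_a)` of the Green class of `a`. -/
def stab (a : S) : Set S := {c : S | ∀ x ∈ HClass S a, c + x ∈ HClass S a}

theorem gLe_trans {a b c : S} (h1 : gLe S a b) (h2 : gLe S b c) : gLe S a c := by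
  rcases h1 with rfl | ⟨u, rfl⟩
  · exact h2
  · rcases h2 with rfl | ⟨v, rfl⟩
    · exact Or.inr ⟨u, rfl⟩
    · exact Or.inr ⟨v + u, by rw [add_assoc]⟩

theorem gLe_add_right {a b : S} (x : S) (h : gLe S a b) : gLe S (a + x) (b + x) := by
  rcases h with rfl | ⟨c, rfl⟩
  · exact Or.inl rfl
  · exact Or.inr ⟨c, by rw [add_right_comm]⟩

theorem gEq_add {w x y z : S} (h1 : gEq S w x) (h2 : gEq S y z) : gEq S (w + y) (x + z) := by
  have k1 : gLe S (w + y) (x + y) := gLe_add_right S y h1.1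
  have k2 : gLe S (x + y) (x + z) := by
    have h := gLe_add_right S x h2.1
    rwa [add_comm z x, add_comm y x] at h
  have k3 : gLe S (x + z) (w + z) := gLe_add_right S z h1.2
  have k4 : gLe S (w + z) (w + y) := by
    have h := gLe_add_right S w h2.2
    rwa [add_comm z w, add_comm y w] at h
  exact ⟨gLe_trans S k1 k2, gLe_trans S k3 k4⟩

/-- Green's congruence as an additive congruence. -/
def greenCon : AddCon S where
  r a b := gEq S a b
  iseqv := ⟨fun _ => ⟨Or.inl rfl, Or.inl rfl⟩, fun h => ⟨h.2, h.1⟩,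
    fun h1 h2 => ⟨gLe_trans S h1.1 h2.1, gLe_trans S h2.2 h1.2⟩⟩
  add' h1 h2 := gEq_add S h1 h2

/-- The quotient semigroup `S/𝓗`. -/
abbrev GQuot := (greenCon S).Quotient

/-- The canonical epimorphism `S → S/𝓗`, `a ↦ ā`. -/
def gq (a : S) : GQuot S := (a : (greenCon S).Quotient)

/-- The sum of a sequence (multiset) of elements of `S`, computed in `WithZero S`
(the empty sequence having sum the adjoined zero). -/
def msum (T : Multiset S) : WithZero S := (T.map fun x => (x : WithZero S)).sum

/-- A sequence over a commutative semigroup is (additively) reducible if some proper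
(possibly empty) subsequence has the same sum; the empty sequence has sum the identity of `S`,
when `S` has one. -/
def IsReducible (T : Multiset S) : Prop :=
  (∃ T' : Multiset S, T' ≤ T ∧ T' ≠ T ∧ T' ≠ 0 ∧ msum S T' = msum S T) ∨
    (T ≠ 0 ∧ ∃ z : S, msum S T = ↑z ∧ ∀ s : S, z + s = s)

/-- The Davenport constant `D(S)` of a commutative semigroup. -/
noncomputable def Dav : ℕ∞ :=
  sInf {n : ℕ∞ | ∀ T : Multiset S, (T.card : ℕ∞) ≥ n → IsReducible S T}

/-- The relative Davenport constant `D_a(S)`: the largest length of an additively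
irreducible sequence with sum `a`. -/
noncomputable def Drel (a : S) : ℕ∞ :=
  sSup {n : ℕ∞ | ∃ T : Multiset S,
    T ≠ 0 ∧ ¬ IsReducible S T ∧ msum S T = ↑a ∧ n = (T.card : ℕ∞)}

/-- The Erdős–Burgess constant `I(S)`: the smallest `ℓ` such that every sequence over `S` of
length (at least) `ℓ` has a nonempty subsequence with idempotent sum. -/
noncomputable def EB : ℕ∞ :=
  sInf {n : ℕ∞ | ∀ T : Multiset S, (T.card : ℕ∞) ≥ n →
    ∃ T' : Multiset S, T' ≤ T ∧ T' ≠ 0 ∧ ∃ x : S, msum S T' = ↑x ∧ x + x = x}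

/-- The Davenport constant of a (semigroup which is a) group: the smallest `ℓ` such that every
sequence of length (at least) `ℓ` has a nonempty subsequence whose sum is the identity element. -/
noncomputable def DavGrpSet : ℕ∞ :=
  sInf {n : ℕ∞ | ∀ T : Multiset S, (T.card : ℕ∞) ≥ n →
    ∃ T' : Multiset S, T' ≤ T ∧ T' ≠ 0 ∧ ∃ z : S, msum S T' = ↑z ∧ ∀ x : S, z + x = x}

/-- The Davenport constant of a finite abelian group. -/
noncomputable def DavG (G : Type*) [AddCommMonoid G] : ℕ∞ :=
  sInf {n : ℕ∞ | ∀ T : Multiset G, (T.card : ℕ∞) ≥ n →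
    ∃ T' : Multiset G, T' ≤ T ∧ T' ≠ 0 ∧ T'.sum = 0}

/-- `ψ(a)`: the largest length of a strictly ascending chain of principal ideals starting at
`(a)`. -/
noncomputable def psi (a : S) : ℕ∞ :=
  sSup {n : ℕ∞ | ∃ ℓ : ℕ, n = (ℓ : ℕ∞) ∧
    ∃ c : ℕ → S, c 0 = a ∧ ∀ i < ℓ, gLt S (c i) (c (i + 1))}

/-- `Ψ(S)`: the largest length of a strictly ascending chain of principal ideals of `S`. -/
noncomputable def PsiS : ℕ∞ := ⨆ a : S, psi S a

/-- A subset of a semigroup which is a subgroup: closed under addition, with an identity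
and inverses. -/
def IsSubgroupSet (T : Set S) : Prop :=
  (∀ x ∈ T, ∀ y ∈ T, x + y ∈ T) ∧
    ∃ z ∈ T, (∀ x ∈ T, z + x = x) ∧ ∀ x ∈ T, ∃ y ∈ T, x + y = z

open Classical in
/-- `ε_a`: `0` if `⟨a⟩` is a group, `1` otherwise. -/
noncomputable def eps (a : S) : ℕ∞ := if IsSubgroupSet S (cyc S a) then 0 else 1

/-- The Schützenberger maps on the Green class `H_a`: maps `x ↦ c + x` for `c ∈ St(H_a)`. -/
def GammaSet (a : S) : Set (↥(HClass S a) → ↥(HClass S a)) :=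
  {f | ∃ c ∈ stab S a, ∀ x : ↥(HClass S a), (↑(f x) : S) = c + ↑x}

/-- The Schützenberger group `Γ(H_a)` (as a type; it is empty when `St(H_a) = ∅`). -/
def Gamma (a : S) : Type _ := ↥(GammaSet S a)

instance (a : S) : Add (Gamma S a) :=
  ⟨fun f g => ⟨f.1 ∘ g.1, by
    obtain ⟨c, hc, hfc⟩ := f.2
    obtain ⟨d, hd, hgd⟩ := g.2
    refine ⟨c + d, fun x hx => by rw [add_assoc]; exact hc _ (hd x hx), fun x => ?_⟩
    show (↑(f.1 (g.1 x)) : S) = c + d + ↑x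
    rw [hfc (g.1 x), hgd x, add_assoc]⟩⟩

instance (a : S) : AddCommSemigroup (Gamma S a) where
  add_assoc f g h := Subtype.ext rfl
  add_comm f g := by
    obtain ⟨c, hc, hfc⟩ := f.2
    obtain ⟨d, hd, hgd⟩ := g.2
    apply Subtype.ext
    funext x
    apply Subtype.ext
    show (↑(f.1 (g.1 x)) : S) = ↑(g.1 (f.1 x))
    rw [hfc (g.1 x), hgd x, hgd (f.1 x), hfc x, add_left_comm]

/-- `St(H_a)` as a subsemigroup of `S`. -/
def stabSub (a : S) : AddSubsemigroup S where
  carrier := stab S a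
  add_mem' := fun {c d} hc hd x hx => by rw [add_assoc]; exact hc _ (hd x hx)

/-- The canonical surjection `π_a : St(H_a) → Γ(H_a)`, `c ↦ γ_c`. -/
def gammaMap (a : S) (c : ↥(stabSub S a)) : Gamma S a :=
  ⟨fun x => ⟨(↑c : S) + ↑x, c.2 ↑x x.2⟩, ⟨↑c, c.2, fun _ => rfl⟩⟩

/-- The semigroup algebra `R[X;S]` of a commutative semigroup, realized inside the monoid
algebra of the monoid obtained from `S` by adjoining an identity element. -/
abbrev SAlg (R : Type*) [CommRing R] (S : Type*) [AddCommSemigroup S] :=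
  AddMonoidAlgebra R (WithZero S)

/-- The monomial `r·X^s` of the semigroup algebra. -/
noncomputable def Xm (R : Type*) [CommRing R] {S : Type*} [AddCommSemigroup S] (s : S) (r : R) :
    SAlg R S := AddMonoidAlgebra.single (↑s) r

/-- The factor `X^s - a·X^{e(s)}` of the semigroup algebra. -/
noncomputable def facX (R : Type*) [CommRing R] {S : Type*} [AddCommSemigroup S]
    (s : S) (a : R) : SAlg R S := Xm R s 1 - Xm R (eIdem S s) a

/-- The invariant `d(S,R)`: the supremum of all `ℓ` such that some sequence `s_1,…,s_ℓ` over
`S` satisfies `(X^{s_1} - a_1 X^{e(s_1)}) ⋯ (X^{s_ℓ} - a_ℓ X^{e(s_ℓ)}) ≠ 0` in `R[X;S]` for all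
nonzero `a_1, …, a_ℓ ∈ R`. -/
noncomputable def dd (R : Type*) [CommRing R] (S : Type*) [AddCommSemigroup S] : ℕ∞ :=
  sSup {n : ℕ∞ | ∃ ℓ : ℕ, n = (ℓ : ℕ∞) ∧ ∃ s : Fin ℓ → S,
    ∀ a : Fin ℓ → R, (∀ i, a i ≠ 0) → ∏ i, facX R (s i) (a i) ≠ 0}

/-- `Λ(S)`: the minimum over all generating sets `A` of `S` of `1 + Σ_{a∈A} (ρ(a)-1)`. -/
noncomputable def Lam (S : Type*) [AddCommSemigroup S] : ℕ :=
  sInf {n : ℕ | ∃ A : Finset S,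
    AddSubsemigroup.closure (↑A : Set S) = ⊤ ∧ n = 1 + ∑ a ∈ A, (rho S a - 1)}

/-- An elementary semigroup: an ideal extension of a nilsemigroup `N` by a group with zero
`G ∪ {∞}`. -/
def IsElementary : Prop :=
  ∃ G N : Set S, G ∪ N = Set.univ ∧ Disjoint G N ∧ IsSubgroupSet S G ∧
    (∀ x ∈ N, ∀ s : S, s + x ∈ N) ∧
    ∃ z ∈ N, (∀ s : S, s + z = z) ∧ ∀ x ∈ N, ∃ n : ℕ, nsmul' S n x = z


theorem nsmul'_add_eq (x : S) (a b : ℕ) :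
    nsmul' S a x + nsmul' S b x = nsmul' S (a + b + 1) x := by
  induction a with
  | zero =>
      show x + nsmul' S b x = nsmul' S (0 + b + 1) x
      have h : 0 + b + 1 = b + 1 := by omega
      rw [h]; rfl
  | succ a ih =>
      show (x + nsmul' S a x) + nsmul' S b x = nsmul' S (a + 1 + b + 1) x
      rw [add_assoc, ih]
      have h : a + 1 + b + 1 = (a + b + 1) + 1 := by omega
      rw [h]; rfl

theorem nsmul'_shift (x : S) {p q : ℕ} (h : nsmul' S p x = nsmul' S q x) (t : ℕ) :
    nsmul' S (p + t) x = nsmul' S (q + t) x := by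
  induction t with
  | zero => simpa using h
  | succ t ih =>
      show x + nsmul' S (p + t) x = x + nsmul' S (q + t) x
      rw [ih]

theorem eIdem_idem (x : S) (hx : IsPeriodicElem S x) :
    eIdem S x + eIdem S x = eIdem S x := by
  have hninj : ¬ Function.Injective (fun n => nsmul' S n x) :=
    fun hinj => (Set.infinite_range_of_injective hinj) hx
  rw [Function.not_injective_iff] at hninj
  obtain ⟨u, v, huv, hne⟩ := hninj
  -- produce i, p with p ≥ 1 and nsmul' (i+p) = nsmul' i
  obtain ⟨i, p, hp, hstep⟩ : ∃ i p : ℕ, 1 ≤ p ∧ nsmul' S (i + p) x = nsmul' S i x := by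
    rcases Nat.lt_or_ge u v with hlt | hge
    · exact ⟨u, v - u, by omega, by
        have h : u + (v - u) = v := by omega
        rw [h]; exact huv.symm⟩
    · have hlt : v < u := lt_of_le_of_ne hge (fun h' => hne h'.symm)
      exact ⟨v, u - v, by omega, by
        have h : v + (u - v) = u := by omega
        rw [h]; exact huv⟩
  have claim : ∀ k : ℕ, nsmul' S (i + k * p) x = nsmul' S i x := by
    intro k
    induction k with
    | zero => simp
    | succ k ih =>
        have h1 : nsmul' S (i + p + k * p) x = nsmul' S (i + k * p) x :=
          nsmul'_shift S x hstep (k * p)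
        have h : i + (k + 1) * p = i + p + k * p := by ring
        rw [h, h1, ih]
  have hmem : ((i + 1) * p - 1) ∈ {n : ℕ | nsmul' S n x + nsmul' S n x = nsmul' S n x} := by
    set n := (i + 1) * p - 1 with hn
    have hni : n = i + (n - i) := by
      have : i + 1 ≤ (i + 1) * p := Nat.le_mul_of_pos_right _ (by omega)
      omega
    have key : nsmul' S (i + (i + 1) * p + (n - i)) x = nsmul' S (i + (n - i)) x :=
      nsmul'_shift S x (claim (i + 1)) (n - i)
    have hidx : n + n + 1 = i + (i + 1) * p + (n - i) := by
      have h1 : i + 1 ≤ (i + 1) * p := Nat.le_mul_of_pos_right _ (by omega)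
      have h2 : n + 1 = (i + 1) * p := by omega
      omega
    show nsmul' S n x + nsmul' S n x = nsmul' S n x
    rw [nsmul'_add_eq, hidx, key, ← hni]
  have hmem' := Nat.sInf_mem ⟨_, hmem⟩
  exact hmem'

theorem sum_coe_eq_coe {m : ℕ} (s : Fin m → S) (t : Finset (Fin m)) (ht : t.Nonempty) :
    ∃ c : S, (∑ i ∈ t, (↑(s i) : WithZero S)) = ↑c := by
  induction t using Finset.induction with
  | empty => exact absurd ht (by simp)
  | @insert j t hj ih =>
      rcases Finset.eq_empty_or_nonempty t with rfl | hne
      · exact ⟨s j, by simp⟩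
      · obtain ⟨c, hc⟩ := ih hne
        exact ⟨s j + c, by rw [Finset.sum_insert hj, hc, WithZero.coe_add]⟩

/-- nonvanishing of the coefficient `c_e` when `St(e) ∩ Σ(T) = ∅`. -/
theorem stmt9 (S : Type*) [AddCommSemigroup S] (hper : IsPeriodicSemigroup S)
    (R : Type*) [CommRing R] [IsDomain R]
    (m : ℕ) (s : Fin m → S) (a : Fin m → R) (ha : ∀ i, a i ≠ 0)
    (e : S) (he : (e : WithZero S) = ∑ i, (↑(eIdem S (s i)) : WithZero S))
    (hdisj : ¬ ∃ c : S, c + e = e ∧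
      ∃ I : Finset (Fin m), I.Nonempty ∧ (↑c : WithZero S) = ∑ i ∈ I, ↑(s i)) :
    (∏ i, facX R (s i) (a i)).coeff (↑e : WithZero S) ≠ 0 ∧ (∏ i, facX R (s i) (a i)) ≠ 0 := by
  classical
  set E : Fin m → WithZero S := fun i => ↑(eIdem S (s i)) with hE
  have hidem : ∀ i, E i + E i = E i := fun i => by
    rw [hE, ← WithZero.coe_add, eIdem_idem S (s i) (hper (s i))]
  -- e absorbs each E i, and hence any sum of them
  have hstep : ∀ j, (↑e : WithZero S) + E j = ↑e := by
    intro j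
    rw [he, ← Finset.add_sum_erase _ E (Finset.mem_univ j)]
    rw [add_right_comm, hidem j]
  have hEsum : ∀ t : Finset (Fin m), (↑e : WithZero S) + ∑ i ∈ t, E i = ↑e := by
    intro t
    induction t using Finset.induction with
    | empty => simp
    | @insert j t hj ih =>
        rw [Finset.sum_insert hj, ← add_assoc, hstep j, ih]
  -- expand the product
  have hfac : ∀ i, facX R (s i) (a i)
      = AddMonoidAlgebra.single (↑(s i) : WithZero S) (1 : R)
        + AddMonoidAlgebra.single (E i) (-(a i)) := by
    intro i
    rw [facX, Xm, Xm, sub_eq_add_neg, hE]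
    congr 1
    exact (AddMonoidAlgebra.single_neg _ _).symm
  have hexp : (∏ i, facX R (s i) (a i))
      = ∑ t ∈ Finset.univ.powerset,
          AddMonoidAlgebra.single
            ((∑ i ∈ t, (↑(s i) : WithZero S)) + ∑ i ∈ Finset.univ \ t, E i)
            (∏ i ∈ Finset.univ \ t, (-(a i))) := by
    simp_rw [hfac]
    rw [Finset.prod_add]
    refine Finset.sum_congr rfl fun t _ => ?_
    rw [AddMonoidAlgebra.prod_single, AddMonoidAlgebra.prod_single,
        AddMonoidAlgebra.single_mul_single]
    simp
  have hcoef : (∏ i, facX R (s i) (a i)).coeff (↑e : WithZero S) = ∏ i, (-(a i)) := by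
    rw [hexp, AddMonoidAlgebra.coeff_sum, Finsupp.finset_sum_apply]; simp_rw [AddMonoidAlgebra.coeff_single]
    rw [Finset.sum_eq_single (∅ : Finset (Fin m))]
    · rw [Finsupp.single_apply, if_pos (by simp [he]), Finset.sdiff_empty]
    · intro t _ hne
      rw [Finsupp.single_apply, if_neg]
      intro hx
      obtain ⟨c, hc⟩ := sum_coe_eq_coe S s t (Finset.nonempty_of_ne_empty hne)
      apply hdisj
      refine ⟨c, ?_, t, Finset.nonempty_of_ne_empty hne, hc.symm⟩
      have hsplit : (∑ i ∈ Finset.univ \ t, E i) + ∑ i ∈ t, E i = ↑e := by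
        rw [he]
        rw [← Finset.sum_sdiff (Finset.subset_univ t)]
      have : (↑(c + e) : WithZero S) = ↑e := by
        rw [WithZero.coe_add, ← hsplit, ← add_assoc, ← hc, hx, hEsum]
        exact hsplit.symm
      exact_mod_cast this
    · simp
  have hprod : (∏ i, (-(a i)) : R) ≠ 0 :=
    Finset.prod_ne_zero_iff.mpr fun i _ => neg_ne_zero.mpr (ha i)
  refine ⟨by rw [hcoef]; exact hprod, ?_⟩
  intro h0
  rw [h0] at hcoef
  exact hprod (by rw [← hcoef]; rfl)

end ZS
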